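/- arXiv:2112.07856 — 3 statements merged into one kernel-verified Lean document; each statement's English description precedes it below -/
import Mathlib

section
/- Among all orthogonal projections P of rank at most k on ℝ^N, the projection onto the span of the first k left singular vectors of the snapshot matrix X minimizes the total squared reconstruction error Σ_{j=1}^M ‖x_j − P x_j‖² (L2-optimality of the POD basis). -/
open Matrix Finset


lemma sum_ite_coe_eq {N : ℕ} (j : ℕ) (f : Fin N → ℝ) :
    (∑ p : Fin N, if (p : ℕ) = j then f p else 0)
      = if h : j < N then f ⟨j, h⟩ else 0 := by
  split
  · next h =>
    rw [Finset.sum_eq_single (⟨j, h⟩ : Fin N)]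
    · simp
    · intro p _ hp
      rw [if_neg]
      simpa [Fin.ext_iff] using hp
    · simp
  · next h =>
    apply Finset.sum_eq_zero
    intro p _
    rw [if_neg]
    omega

lemma err_split {N M : ℕ} (X : Matrix (Fin N) (Fin M) ℝ)
    (P : Matrix (Fin N) (Fin N) ℝ) (hPt : Pᵀ = P) (hPP : P * P = P) :
    ∑ j : Fin M, ∑ n : Fin N, (X n j - (P * X) n j) ^ 2
      = trace (Xᵀ * X) - trace (Xᵀ * (P * X)) := by
  have h1 : ∀ Y : Matrix (Fin N) (Fin M) ℝ,
      trace (Yᵀ * Y) = ∑ j : Fin M, ∑ n : Fin N, (Y n j) ^ 2 := by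
    intro Y
    simp [Matrix.trace, Matrix.diag, Matrix.mul_apply, sq]
  have h2 : (X - P * X)ᵀ * (X - P * X) = Xᵀ * X - Xᵀ * (P * X) := by
    rw [transpose_sub, transpose_mul, Matrix.sub_mul, Matrix.mul_sub, Matrix.mul_sub]
    rw [hPt]
    have : Xᵀ * P * X = Xᵀ * (P * X) := by rw [Matrix.mul_assoc]
    rw [this]
    have h3 : Xᵀ * P * (P * X) = Xᵀ * (P * X) := by
      rw [Matrix.mul_assoc, ← Matrix.mul_assoc P P X, hPP]
    rw [h3]
    abel
  have := h1 (X - P * X)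
  rw [h2] at this
  rw [trace_sub] at this
  simp only [Matrix.sub_apply] at this
  rw [← this]

lemma trace_conj {N M : ℕ} (U : Matrix (Fin N) (Fin N) ℝ) (V : Matrix (Fin M) (Fin M) ℝ)
    (S : Matrix (Fin N) (Fin M) ℝ) (P : Matrix (Fin N) (Fin N) ℝ)
    (hV : Vᵀ * V = 1) :
    trace ((U * S * Vᵀ)ᵀ * (P * (U * S * Vᵀ)))
      = trace (Sᵀ * (Uᵀ * P * U) * S) := by
  have h : (U * S * Vᵀ)ᵀ * (P * (U * S * Vᵀ))
      = V * ((Sᵀ * (Uᵀ * P * U) * S) * Vᵀ) := by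
    simp only [transpose_mul, transpose_transpose, Matrix.mul_assoc]
  rw [h, trace_mul_comm, Matrix.mul_assoc, hV, Matrix.mul_one]

lemma trace_SCS {N M : ℕ} (σ : ℕ → ℝ) (C : Matrix (Fin N) (Fin N) ℝ) :
    trace ((Matrix.of fun (i : Fin N) (j : Fin M) => if (i:ℕ)=(j:ℕ) then σ i else 0)ᵀ * C *
      (Matrix.of fun (i : Fin N) (j : Fin M) => if (i:ℕ)=(j:ℕ) then σ i else 0))
    = ∑ j : Fin M, if h : (j:ℕ) < N then σ (j:ℕ) ^ 2 * C ⟨j,h⟩ ⟨j,h⟩ else 0 := by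
  simp only [Matrix.trace, Matrix.diag, Matrix.mul_apply, Matrix.transpose_apply, Matrix.of_apply,
    ite_mul, mul_ite, zero_mul, mul_zero, sum_ite_coe_eq]
  refine Finset.sum_congr rfl ?_
  intro j _
  by_cases h : (j:ℕ) < N
  · rw [dif_pos h, dif_pos h, dif_pos h]; ring
  · rw [dif_neg h, dif_neg h]

lemma sum_weighted_le (N M k : ℕ) (hkN : k ≤ N) (hkM : k ≤ M) (σ : ℕ → ℝ)
    (hσnonneg : ∀ i, 0 ≤ σ i) (hσdec : ∀ i j, i ≤ j → σ j ≤ σ i)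
    (c : ℕ → ℝ) (hc0 : ∀ i, 0 ≤ c i) (hc1 : ∀ i, c i ≤ 1)
    (hcsum : ∑ i ∈ Finset.range M, c i ≤ (k : ℝ)) :
    ∑ j ∈ Finset.range M, (if j < N then σ j ^ 2 else 0) * c j
      ≤ ∑ i ∈ Finset.range k, σ i ^ 2 := by
  set t := σ k ^ 2 with ht_def
  have ht : 0 ≤ t := sq_nonneg _
  have hpt : ∀ j ∈ Finset.range M,
      (if j < N then σ j ^ 2 else 0) * c j
        ≤ (if j < k then σ j ^ 2 - t else 0) + t * c j := by
    intro j _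
    by_cases hj : j < k
    · have hjN : j < N := lt_of_lt_of_le hj hkN
      rw [if_pos hjN, if_pos hj]
      have h1 : t ≤ σ j ^ 2 := pow_le_pow_left₀ (hσnonneg k) (hσdec j k hj.le) 2
      nlinarith [hc1 j, hc0 j]
    · rw [if_neg hj]
      have h2 : (if j < N then σ j ^ 2 else 0) ≤ t := by
        split
        · exact pow_le_pow_left₀ (hσnonneg j) (hσdec k j (le_of_not_gt hj)) 2
        · exact ht
      have := mul_le_mul_of_nonneg_right h2 (hc0 j)
      linarith
  have hsum := Finset.sum_le_sum hpt
  have hA : ∑ j ∈ Finset.range M, (if j < k then σ j ^ 2 - t else 0)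
      = ∑ j ∈ Finset.range k, (σ j ^ 2 - t) := by
    rw [← Finset.sum_subset (Finset.range_subset_range.2 hkM)
      (fun x _ hx => by rw [if_neg]; simpa using hx)]
    exact Finset.sum_congr rfl fun x hx => by rw [if_pos (Finset.mem_range.1 hx)]
  have hB : ∑ j ∈ Finset.range k, (σ j ^ 2 - t)
      = (∑ j ∈ Finset.range k, σ j ^ 2) - k * t := by
    rw [Finset.sum_sub_distrib, Finset.sum_const, Finset.card_range, nsmul_eq_mul]
  have hC : t * (∑ i ∈ Finset.range M, c i) ≤ t * k :=
    mul_le_mul_of_nonneg_left hcsum ht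
  calc ∑ j ∈ Finset.range M, (if j < N then σ j ^ 2 else 0) * c j
      ≤ ∑ j ∈ Finset.range M, ((if j < k then σ j ^ 2 - t else 0) + t * c j) := hsum
    _ = (∑ j ∈ Finset.range k, σ j ^ 2) - k * t + t * (∑ i ∈ Finset.range M, c i) := by
        rw [Finset.sum_add_distrib, hA, hB, Finset.mul_sum]
    _ ≤ ∑ j ∈ Finset.range k, σ j ^ 2 := by linarith


/-- L2-optimality of the POD basis: among all rank-≤k orthogonal projections
QQᵀ, the projection onto the span of the first k left singular vectors of X
minimizes the total squared reconstruction error of the columns of X. -/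
theorem pod_optimality
    (N M k : ℕ) (hk : k ≤ min N M)
    (X : Matrix (Fin N) (Fin M) ℝ)
    (U : Matrix (Fin N) (Fin N) ℝ) (V : Matrix (Fin M) (Fin M) ℝ)
    (σ : ℕ → ℝ)
    (hU : Uᵀ * U = 1) (hV : Vᵀ * V = 1)
    (hσnonneg : ∀ i, 0 ≤ σ i)
    (hσdec : ∀ i j, i ≤ j → σ j ≤ σ i)
    (hSVD : X = U * (Matrix.of fun (i : Fin N) (j : Fin M) =>
        if (i : ℕ) = (j : ℕ) then σ (i : ℕ) else 0) * Vᵀ)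
    (Q : Matrix (Fin N) (Fin k) ℝ) (hQ : Qᵀ * Q = 1) :
    ∑ j : Fin M, ∑ n : Fin N,
        (X n j - ∑ i : Fin N, if (i : ℕ) < k then
            U n i * (∑ m : Fin N, U m i * X m j) else 0) ^ 2
      ≤ ∑ j : Fin M, ∑ n : Fin N,
        (X n j - ((Q * Qᵀ) *ᵥ (fun m => X m j)) n) ^ 2 := by
  have hkN : k ≤ N := hk.trans (min_le_left _ _)
  have hkM : k ≤ M := hk.trans (min_le_right _ _)
  set S : Matrix (Fin N) (Fin M) ℝ := Matrix.of fun (i : Fin N) (j : Fin M) =>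
      if (i : ℕ) = (j : ℕ) then σ (i : ℕ) else 0 with hS_def
  set D : Matrix (Fin N) (Fin N) ℝ :=
      Matrix.diagonal (fun i : Fin N => if (i : ℕ) < k then (1:ℝ) else 0) with hD_def
  set P₁ : Matrix (Fin N) (Fin N) ℝ := U * D * Uᵀ with hP1_def
  set P₂ : Matrix (Fin N) (Fin N) ℝ := Q * Qᵀ with hP2_def
  have hUUT : U * Uᵀ = 1 := mul_eq_one_comm.mp hU
  -- projection properties
  have hDD : D * D = D := by
    rw [hD_def, Matrix.diagonal_mul_diagonal]
    refine congrArg Matrix.diagonal (funext fun i => ?_)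
    by_cases h : (i : ℕ) < k <;> simp [h]
  have hDt : Dᵀ = D := by rw [hD_def, Matrix.diagonal_transpose]
  have hP1t : P₁ᵀ = P₁ := by
    rw [hP1_def]
    simp only [transpose_mul, transpose_transpose, hDt, Matrix.mul_assoc]
  have hP1P1 : P₁ * P₁ = P₁ := by
    rw [hP1_def]
    calc U * D * Uᵀ * (U * D * Uᵀ) = U * D * ((Uᵀ * U) * (D * Uᵀ)) := by
          simp only [Matrix.mul_assoc]
      _ = U * (D * D) * Uᵀ := by rw [hU, Matrix.one_mul]; simp only [Matrix.mul_assoc]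
      _ = U * D * Uᵀ := by rw [hDD]
  have hP2t : P₂ᵀ = P₂ := by
    rw [hP2_def, transpose_mul, transpose_transpose]
  have hP2P2 : P₂ * P₂ = P₂ := by
    rw [hP2_def]
    calc Q * Qᵀ * (Q * Qᵀ) = Q * ((Qᵀ * Q) * Qᵀ) := by simp only [Matrix.mul_assoc]
      _ = Q * Qᵀ := by rw [hQ, Matrix.one_mul]
  -- rewrite both sides via err_split
  have hLHS : ∑ j : Fin M, ∑ n : Fin N,
      (X n j - ∑ i : Fin N, if (i : ℕ) < k then
          U n i * (∑ m : Fin N, U m i * X m j) else 0) ^ 2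
      = trace (Xᵀ * X) - trace (Xᵀ * (P₁ * X)) := by
    rw [← err_split X P₁ hP1t hP1P1]
    refine Finset.sum_congr rfl fun j _ => Finset.sum_congr rfl fun n _ => ?_
    congr 1
    congr 1
    have : P₁ * X = U * (D * (Uᵀ * X)) := by simp only [hP1_def, Matrix.mul_assoc]
    rw [this]
    simp only [Matrix.mul_apply, Matrix.transpose_apply]
    refine Finset.sum_congr rfl fun i _ => ?_
    conv_rhs => rw [Finset.sum_eq_single i
      (fun b _ hb => by rw [hD_def, Matrix.diagonal_apply_ne _ (Ne.symm hb), zero_mul])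
      (fun h => absurd (Finset.mem_univ i) h)]
    rw [hD_def, Matrix.diagonal_apply_eq]
    by_cases h : (i : ℕ) < k <;> simp [h]
  have hRHS : ∑ j : Fin M, ∑ n : Fin N,
      (X n j - ((Q * Qᵀ) *ᵥ (fun m => X m j)) n) ^ 2
      = trace (Xᵀ * X) - trace (Xᵀ * (P₂ * X)) := by
    rw [← err_split X P₂ hP2t hP2P2]
    refine Finset.sum_congr rfl fun j _ => Finset.sum_congr rfl fun n _ => ?_
    rfl
  rw [hLHS, hRHS]
  apply sub_le_sub_left
  -- compute traces via SVD
  have htr1 : trace (Xᵀ * (P₁ * X)) = ∑ i ∈ Finset.range k, σ i ^ 2 := by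
    rw [hSVD]
    rw [trace_conj U V S P₁ hV]
    have hC1 : Uᵀ * P₁ * U = D := by
      calc Uᵀ * (U * D * Uᵀ) * U = (Uᵀ * U) * D * (Uᵀ * U) := by
            simp only [Matrix.mul_assoc]
        _ = D := by rw [hU, Matrix.one_mul, Matrix.mul_one]
    rw [hC1, trace_SCS]
    rw [Fin.sum_univ_eq_sum_range (fun j => if h : j < N then
        σ j ^ 2 * D ⟨j, h⟩ ⟨j, h⟩ else 0) M]
    rw [← Finset.sum_subset (Finset.range_subset_range.2 hkM) (fun x _ hx => ?_)]
    · refine Finset.sum_congr rfl fun x hx => ?_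
      have hxk : x < k := Finset.mem_range.1 hx
      have hxN : x < N := lt_of_lt_of_le hxk hkN
      rw [dif_pos hxN, hD_def, Matrix.diagonal_apply_eq]
      simp [hxk]
    · have hxk : ¬ x < k := by simpa using hx
      split
      · next h => rw [hD_def, Matrix.diagonal_apply_eq]; rw [if_neg hxk, mul_zero]
      · rfl
  have htr2 : trace (Xᵀ * (P₂ * X)) ≤ ∑ i ∈ Finset.range k, σ i ^ 2 := by
    rw [hSVD, trace_conj U V S P₂ hV, trace_SCS]
    set C : Matrix (Fin N) (Fin N) ℝ := Uᵀ * P₂ * U with hC_def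
    set B : Matrix (Fin k) (Fin N) ℝ := Qᵀ * U with hB_def
    have hCB : C = Bᵀ * B := by
      rw [hC_def, hB_def, hP2_def, transpose_mul, transpose_transpose]
      simp only [Matrix.mul_assoc]
    -- diagonal entries of C
    have hCdiag_nonneg : ∀ j : Fin N, 0 ≤ C j j := by
      intro j
      rw [hCB]
      simp only [Matrix.mul_apply, Matrix.transpose_apply]
      exact Finset.sum_nonneg fun t _ => mul_self_nonneg _
    have hCdiag_le : ∀ j : Fin N, C j j ≤ 1 := by
      intro j
      have hAA : (U - Q * B)ᵀ * (U - Q * B) = 1 - C := by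
        rw [transpose_sub, transpose_mul]
        rw [Matrix.sub_mul, Matrix.mul_sub, Matrix.mul_sub]
        rw [hU]
        have e1 : Uᵀ * (Q * B) = C := by
          rw [hC_def, hP2_def, hB_def]; simp only [Matrix.mul_assoc]
        have e2 : Bᵀ * Qᵀ * U = C := by
          rw [hCB, hB_def, transpose_mul, transpose_transpose, Matrix.mul_assoc]
        have e3 : Bᵀ * Qᵀ * (Q * B) = C := by
          rw [hCB]
          calc Bᵀ * Qᵀ * (Q * B) = Bᵀ * ((Qᵀ * Q) * B) := by simp only [Matrix.mul_assoc]
            _ = Bᵀ * B := by rw [hQ, Matrix.one_mul]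
        rw [e1, e2, e3]
        abel
      have h0 : 0 ≤ ((U - Q * B)ᵀ * (U - Q * B)) j j := by
        simp only [Matrix.mul_apply, Matrix.transpose_apply]
        exact Finset.sum_nonneg fun t _ => mul_self_nonneg _
      rw [hAA] at h0
      simp only [Matrix.sub_apply, Matrix.one_apply_eq] at h0
      linarith
    have hCtrace : trace C = (k : ℝ) := by
      have hC' : C = Uᵀ * (P₂ * U) := by rw [hC_def, Matrix.mul_assoc]
      rw [hC', trace_mul_comm, Matrix.mul_assoc, hUUT, Matrix.mul_one, hP2_def,
        trace_mul_comm, hQ, Matrix.trace_one]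
      simp
    -- define c : ℕ → ℝ
    set c : ℕ → ℝ := fun i => if h : i < N then C ⟨i, h⟩ ⟨i, h⟩ else 0 with hc_def
    have hc0 : ∀ i, 0 ≤ c i := by
      intro i; rw [hc_def]; dsimp only; split
      · exact hCdiag_nonneg _
      · exact le_refl 0
    have hc1 : ∀ i, c i ≤ 1 := by
      intro i; rw [hc_def]; dsimp only; split
      · exact hCdiag_le _
      · norm_num
    have hcN : ∑ i ∈ Finset.range N, c i = (k : ℝ) := by
      rw [← Fin.sum_univ_eq_sum_range c N, ← hCtrace]
      rw [Matrix.trace]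
      refine Finset.sum_congr rfl fun i _ => ?_
      rw [hc_def]
      simp [Matrix.diag]
    have hcsum : ∑ i ∈ Finset.range M, c i ≤ (k : ℝ) := by
      calc ∑ i ∈ Finset.range M, c i ≤ ∑ i ∈ Finset.range (max M N), c i :=
            Finset.sum_le_sum_of_subset_of_nonneg
              (Finset.range_subset_range.2 (le_max_left _ _)) (fun i _ _ => hc0 i)
        _ = ∑ i ∈ Finset.range N, c i := by
            rw [← Finset.sum_subset (Finset.range_subset_range.2 (le_max_right M N))
              (fun x _ hx => by rw [hc_def]; exact dif_neg (by simpa using hx))]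
        _ = (k : ℝ) := hcN
    calc (∑ j : Fin M, if h : (j:ℕ) < N then σ (j:ℕ) ^ 2 * C ⟨j,h⟩ ⟨j,h⟩ else 0)
        = ∑ j ∈ Finset.range M, (if j < N then σ j ^ 2 else 0) * c j := by
          rw [Fin.sum_univ_eq_sum_range (fun j => if h : j < N then
              σ j ^ 2 * C ⟨j, h⟩ ⟨j, h⟩ else 0) M]
          refine Finset.sum_congr rfl fun x _ => ?_
          by_cases h : x < N
          · rw [dif_pos h, if_pos h, hc_def]; dsimp only; rw [dif_pos h]
          · rw [dif_neg h, if_neg h, zero_mul]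
      _ ≤ ∑ i ∈ Finset.range k, σ i ^ 2 :=
          sum_weighted_le N M k hkN hkM σ hσnonneg hσdec c hc0 hc1 hcsum
  rw [htr1]
  exact htr2
end

section
/- In the linear setting, the unique minimizer of the 4D-Var cost is x₀ᵃ = (B₀⁻¹ + Σ_{i=1}^T M_iᵀHᵀR_i⁻¹HM_i)⁻¹ (B₀⁻¹ x₀ᵇ + Σ_{i=1}^T M_iᵀHᵀR_i⁻¹ y_i); i.e., this point satisfies ∇J(x₀ᵃ) = 0 and J(x₀ᵃ) ≤ J(x) for all x. -/
open Matrix Finset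

set_option maxHeartbeats 1000000

private lemma dotProduct_sum' {k : ℕ} {ι : Type*} (v : Fin k → ℝ) (s : Finset ι)
    (f : ι → Fin k → ℝ) : v ⬝ᵥ (∑ i ∈ s, f i) = ∑ i ∈ s, v ⬝ᵥ f i := by
  simp only [dotProduct, Finset.sum_apply, Finset.mul_sum]
  exact Finset.sum_comm

private lemma sum_mulVec' {k l : ℕ} {ι : Type*} (s : Finset ι)
    (M : ι → Matrix (Fin k) (Fin l) ℝ) (v : Fin l → ℝ) :
    (∑ i ∈ s, M i) *ᵥ v = ∑ i ∈ s, M i *ᵥ v := by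
  funext j
  simp only [mulVec, dotProduct, Matrix.sum_apply, Finset.sum_mul, Finset.sum_apply]
  rw [Finset.sum_comm]

private lemma dot_symm' {k : ℕ} (S : Matrix (Fin k) (Fin k) ℝ) (hS : Sᵀ = S)
    (a b : Fin k → ℝ) : a ⬝ᵥ S *ᵥ b = b ⬝ᵥ S *ᵥ a := by
  rw [dotProduct_mulVec b S a]
  conv_rhs => rw [← hS, vecMul_transpose]
  rw [dotProduct_comm]

private lemma quad_expand' {k : ℕ} (S : Matrix (Fin k) (Fin k) ℝ) (hS : Sᵀ = S)
    (a u : Fin k → ℝ) :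
    (a + u) ⬝ᵥ S *ᵥ (a + u) = a ⬝ᵥ S *ᵥ a + 2 * (u ⬝ᵥ S *ᵥ a) + u ⬝ᵥ S *ᵥ u := by
  rw [mulVec_add]
  simp only [dotProduct_add, add_dotProduct]
  rw [dot_symm' S hS a u]
  ring

private lemma cross' {k l : ℕ} (K : Matrix (Fin l) (Fin k) ℝ) (R : Matrix (Fin l) (Fin l) ℝ)
    (u : Fin k → ℝ) (w : Fin l → ℝ) :
    (K *ᵥ u) ⬝ᵥ R *ᵥ w = u ⬝ᵥ (Kᵀ * R) *ᵥ w := by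
  rw [← mulVec_mulVec]
  conv_rhs => rw [dotProduct_mulVec, vecMul_transpose]

/-- the bilinear form of a matrix as a continuous linear map -/
private noncomputable def bilCLM {k : ℕ} (A : Matrix (Fin k) (Fin k) ℝ) :
    (Fin k → ℝ) →L[ℝ] (Fin k → ℝ) →L[ℝ] ℝ :=
  LinearMap.toContinuousLinearMap
    { toFun := fun u => LinearMap.toContinuousLinearMap (Matrix.toLinearMap₂' ℝ A u)
      map_add' := fun u v => by ext w; simp
      map_smul' := fun c u => by ext w; simp }

private lemma bilCLM_apply {k : ℕ} (A : Matrix (Fin k) (Fin k) ℝ) (u v : Fin k → ℝ) :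
    bilCLM A u v = u ⬝ᵥ A *ᵥ v := by
  simp [bilCLM, Matrix.toLinearMap₂'_apply']

/-- Explicit minimizer of the linear 4D-Var cost: the normal-equations solution
has vanishing gradient (zero Fréchet derivative) and is a global minimizer. -/
theorem fourDVar_linear_minimizer
    (n m T : ℕ)
    (Binv : Matrix (Fin n) (Fin n) ℝ) (Rinv : Fin T → Matrix (Fin m) (Fin m) ℝ)
    (hB : Binv.PosDef) (hR : ∀ i, (Rinv i).PosDef)
    (Mlin : Fin T → Matrix (Fin n) (Fin n) ℝ) (H : Matrix (Fin m) (Fin n) ℝ)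
    (xb : Fin n → ℝ) (y : Fin T → Fin m → ℝ)
    (J : (Fin n → ℝ) → ℝ)
    (hJ : ∀ x, J x = (1/2) * ((x - xb) ⬝ᵥ (Binv *ᵥ (x - xb))) +
      (1/2) * ∑ i, (H *ᵥ (Mlin i *ᵥ x) - y i) ⬝ᵥ (Rinv i *ᵥ (H *ᵥ (Mlin i *ᵥ x) - y i)))
    (xa : Fin n → ℝ)
    (hxa : xa = (Binv + ∑ i, (Mlin i)ᵀ * Hᵀ * Rinv i * H * Mlin i)⁻¹ *ᵥ
      (Binv *ᵥ xb + ∑ i, ((Mlin i)ᵀ * Hᵀ * Rinv i) *ᵥ y i)) :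
    fderiv ℝ J xa = 0 ∧ ∀ x, J xa ≤ J x := by
  classical
  set A : Matrix (Fin n) (Fin n) ℝ := Binv + ∑ i, (Mlin i)ᵀ * Hᵀ * Rinv i * H * Mlin i with hAdef
  set bv : Fin n → ℝ := Binv *ᵥ xb + ∑ i, ((Mlin i)ᵀ * Hᵀ * Rinv i) *ᵥ y i with hbvdef
  have hsymmB : Binvᵀ = Binv := by
    have := hB.isHermitian
    rwa [IsHermitian, conjTranspose_eq_transpose_of_trivial] at this
  have hsymmR : ∀ i, (Rinv i)ᵀ = Rinv i := fun i => by
    have := (hR i).isHermitian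
    rwa [IsHermitian, conjTranspose_eq_transpose_of_trivial] at this
  -- A is positive definite
  have hsemi : ∀ i : Fin T, ((Mlin i)ᵀ * Hᵀ * Rinv i * H * Mlin i).PosSemidef := by
    intro i
    have h := (hR i).posSemidef.conjTranspose_mul_mul_same (B := H * Mlin i)
    rw [conjTranspose_eq_transpose_of_trivial, transpose_mul] at h
    simpa [Matrix.mul_assoc] using h
  have hsum : (∑ i, (Mlin i)ᵀ * Hᵀ * Rinv i * H * Mlin i).PosSemidef := by
    apply Finset.sum_induction _ _ (fun a b ha hb => ha.add hb) Matrix.PosSemidef.zero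
    exact fun i _ => hsemi i
  have hA : A.PosDef := hB.add_posSemidef hsum
  have hAxa : A *ᵥ xa = bv := by
    rw [hxa, mulVec_mulVec, Matrix.mul_nonsing_inv _ hA.det_pos.ne'.isUnit, one_mulVec]
  -- the gradient vanishes at xa
  have hgrad : Binv *ᵥ (xa - xb) +
      ∑ i, ((Mlin i)ᵀ * Hᵀ * Rinv i) *ᵥ ((H * Mlin i) *ᵥ xa - y i) = 0 := by
    have expand : ∀ i : Fin T, ((Mlin i)ᵀ * Hᵀ * Rinv i) *ᵥ ((H * Mlin i) *ᵥ xa - y i)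
        = ((Mlin i)ᵀ * Hᵀ * Rinv i * H * Mlin i) *ᵥ xa
          - ((Mlin i)ᵀ * Hᵀ * Rinv i) *ᵥ y i := by
      intro i
      rw [mulVec_sub, mulVec_mulVec, Matrix.mul_assoc ((Mlin i)ᵀ * Hᵀ * Rinv i),
        ← Matrix.mul_assoc]
    calc Binv *ᵥ (xa - xb) +
        ∑ i, ((Mlin i)ᵀ * Hᵀ * Rinv i) *ᵥ ((H * Mlin i) *ᵥ xa - y i)
        = (Binv *ᵥ xa - Binv *ᵥ xb) +
          ∑ i, (((Mlin i)ᵀ * Hᵀ * Rinv i * H * Mlin i) *ᵥ xa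
            - ((Mlin i)ᵀ * Hᵀ * Rinv i) *ᵥ y i) := by
          rw [mulVec_sub]
          congr 1
          exact Finset.sum_congr rfl fun i _ => expand i
      _ = A *ᵥ xa - bv := by
          rw [hAdef, hbvdef, add_mulVec, sum_mulVec', Finset.sum_sub_distrib]
          abel
      _ = 0 := by rw [hAxa, sub_self]
  -- key quadratic expansion
  have key : ∀ u : Fin n → ℝ, J (xa + u) = J xa + (1/2) * (u ⬝ᵥ A *ᵥ u) := by
    intro u
    rw [hJ, hJ]
    have e1 : xa + u - xb = (xa - xb) + u := by abel
    have e2 : ∀ i : Fin T, H *ᵥ (Mlin i *ᵥ (xa + u)) - y i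
        = ((H * Mlin i) *ᵥ xa - y i) + (H * Mlin i) *ᵥ u := by
      intro i
      rw [mulVec_mulVec, mulVec_add, add_sub_right_comm]
    have e3 : ∀ i : Fin T, H *ᵥ (Mlin i *ᵥ xa) - y i = (H * Mlin i) *ᵥ xa - y i := by
      intro i; rw [mulVec_mulVec]
    simp_rw [e1, e2, e3]
    rw [quad_expand' Binv hsymmB]
    have e4 : ∀ i : Fin T,
        (((H * Mlin i) *ᵥ xa - y i) + (H * Mlin i) *ᵥ u) ⬝ᵥ
          Rinv i *ᵥ (((H * Mlin i) *ᵥ xa - y i) + (H * Mlin i) *ᵥ u)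
        = ((H * Mlin i) *ᵥ xa - y i) ⬝ᵥ Rinv i *ᵥ ((H * Mlin i) *ᵥ xa - y i)
          + 2 * (u ⬝ᵥ ((H * Mlin i)ᵀ * Rinv i) *ᵥ ((H * Mlin i) *ᵥ xa - y i))
          + u ⬝ᵥ ((H * Mlin i)ᵀ * Rinv i * (H * Mlin i)) *ᵥ u := by
      intro i
      rw [quad_expand' (Rinv i) (hsymmR i), cross', cross']
      simp only [mulVec_mulVec, Matrix.mul_assoc]
    simp_rw [e4]
    rw [Finset.sum_add_distrib, Finset.sum_add_distrib, ← Finset.mul_sum]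
    have ecross : u ⬝ᵥ Binv *ᵥ (xa - xb) +
        ∑ i, u ⬝ᵥ ((H * Mlin i)ᵀ * Rinv i) *ᵥ ((H * Mlin i) *ᵥ xa - y i) = 0 := by
      rw [← dotProduct_sum', ← dotProduct_add]
      have : ∀ i : Fin T, (H * Mlin i)ᵀ * Rinv i = (Mlin i)ᵀ * Hᵀ * Rinv i := by
        intro i; rw [transpose_mul]
      simp_rw [this]
      rw [hgrad, dotProduct_zero]
    have equad : u ⬝ᵥ Binv *ᵥ u +
        ∑ i, u ⬝ᵥ ((H * Mlin i)ᵀ * Rinv i * (H * Mlin i)) *ᵥ u = u ⬝ᵥ A *ᵥ u := by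
      have hAeq : Binv + ∑ i, (H * Mlin i)ᵀ * Rinv i * (H * Mlin i) = A := by
        rw [hAdef]
        congr 1
        refine Finset.sum_congr rfl fun i _ => ?_
        simp [transpose_mul, Matrix.mul_assoc]
      rw [← dotProduct_sum', ← dotProduct_add, ← sum_mulVec', ← add_mulVec, hAeq]
    linarith [ecross, equad]
  -- conclusion
  constructor
  · have hJeq : J = fun x => J xa + (1/2) * (bilCLM A (x - xa) (x - xa)) := by
      funext x
      rw [bilCLM_apply]
      have h := key (x - xa)
      rwa [add_sub_cancel] at h
    have hbil : IsBoundedBilinearMap ℝ fun p : (Fin n → ℝ) × (Fin n → ℝ) =>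
        bilCLM A p.1 p.2 := (bilCLM A).isBoundedBilinearMap
    have h1 := hbil.hasFDerivAt (xa - xa, xa - xa)
    have h2 : HasFDerivAt (fun x : Fin n → ℝ => (x - xa, x - xa))
        (((ContinuousLinearMap.id ℝ (Fin n → ℝ)).prod (ContinuousLinearMap.id ℝ (Fin n → ℝ)))) xa := by
      apply HasFDerivAt.prodMk <;> exact (hasFDerivAt_id xa).sub_const xa
    have h3 := h1.comp xa h2
    have hD : (hbil.deriv (xa - xa, xa - xa)).comp
        (((ContinuousLinearMap.id ℝ (Fin n → ℝ)).prod (ContinuousLinearMap.id ℝ (Fin n → ℝ)))) = 0 := by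
      ext v
      simp [IsBoundedBilinearMap.deriv_apply, sub_self]
    rw [hD] at h3
    have h4 : HasFDerivAt J (0 : (Fin n → ℝ) →L[ℝ] ℝ) xa := by
      rw [hJeq]
      have h5 := (h3.const_mul (1/2 : ℝ)).const_add (J xa)
      simpa using h5
    exact h4.fderiv
  · intro x
    have h := key (x - xa)
    rw [add_sub_cancel] at h
    rw [h]
    have hnn : 0 ≤ (x - xa) ⬝ᵥ A *ᵥ (x - xa) := by
      have := hA.posSemidef.dotProduct_mulVec_nonneg (x - xa)
      simpa using this
    linarith
end

section
/- If an orthogonal projection Π on ℝ^N has rank k, then for any matrix X ∈ ℝ^{N×M}, ‖X − ΠX‖_F² ≥ Σ_{i=k+1}^{min(N,M)} σ_i(X)², with equality when Π projects onto the top-k left singular subspace (Eckart–Young for projections). -/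
open Matrix Finset

lemma aux_sum_fin {N : ℕ} (k : ℕ) (hkN : k ≤ N) (f : ℕ → ℝ) :
    ∑ i : Fin N, (if (i : ℕ) < k then f (i : ℕ) else 0) = ∑ i ∈ Finset.range k, f i := by
  rw [Fin.sum_univ_eq_sum_range (fun i => if i < k then f i else 0) N]
  rw [← Finset.sum_subset (Finset.range_subset_range.mpr hkN)
    (fun x _ hx => if_neg (by simpa using hx))]
  exact Finset.sum_congr rfl fun x hx => (if_pos (Finset.mem_range.mp hx))

lemma trace_idem {n : ℕ} (P : Matrix (Fin n) (Fin n) ℝ) (h : P * P = P) :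
    Matrix.trace P = (P.rank : ℝ) := by
  have hf : P.mulVecLin ∘ₗ P.mulVecLin = P.mulVecLin := by
    rw [← Matrix.mulVecLin_mul, h]
  obtain ⟨p, hp⟩ := (LinearMap.isProj_iff_isIdempotentElem P.mulVecLin).mpr hf
  have hrange : p = LinearMap.range P.mulVecLin := by
    apply le_antisymm
    · intro x hx; exact ⟨x, hp.map_id x hx⟩
    · rintro x ⟨y, rfl⟩; exact hp.map_mem y
  have ht := hp.trace
  rw [LinearMap.trace_eq_matrix_trace ℝ (Pi.basisFun ℝ (Fin n)),
      LinearMap.toMatrix_eq_toMatrix', ← Matrix.toLin'_apply', LinearMap.toMatrix'_toLin'] at ht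
  rw [ht, hrange]
  rfl

lemma frob {N M : ℕ} (A : Matrix (Fin N) (Fin M) ℝ) :
    ∑ i, ∑ j, (A i j) ^ 2 = Matrix.trace (A * Aᵀ) := by
  simp [Matrix.trace, Matrix.mul_apply, Matrix.diag, sq]

lemma pseudo_diag_mul {N M : ℕ} (f : ℕ → ℝ) (P : ℕ → Prop) [DecidablePred P] :
    ((Matrix.of fun (i : Fin N) (j : Fin M) =>
        if (i : ℕ) = (j : ℕ) ∧ P (i : ℕ) then f (i : ℕ) else 0) *
      (Matrix.of fun (i : Fin N) (j : Fin M) =>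
        if (i : ℕ) = (j : ℕ) ∧ P (i : ℕ) then f (i : ℕ) else 0)ᵀ) =
    Matrix.diagonal (fun a : Fin N => if (a : ℕ) < M ∧ P (a : ℕ) then f (a : ℕ) ^ 2 else 0) := by
  ext a b
  simp only [Matrix.mul_apply, Matrix.transpose_apply, Matrix.of_apply]
  rcases eq_or_ne a b with rfl | hab
  · rw [Matrix.diagonal_apply_eq]
    by_cases h : (a : ℕ) < M ∧ P (a : ℕ)
    · rw [if_pos h, Finset.sum_eq_single (⟨(a : ℕ), h.1⟩ : Fin M)]
      · rw [if_pos ⟨rfl, h.2⟩]; ring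
      · intro j _ hj
        rw [if_neg, zero_mul]
        rintro ⟨h1, _⟩
        exact hj (Fin.ext h1.symm)
      · intro hmem; exact absurd (Finset.mem_univ _) hmem
    · rw [if_neg h]
      refine Finset.sum_eq_zero fun j _ => ?_
      rw [if_neg, zero_mul]
      rintro ⟨h1, h2⟩
      exact h ⟨h1 ▸ j.isLt, h2⟩
  · rw [Matrix.diagonal_apply_ne _ hab]
    refine Finset.sum_eq_zero fun j _ => ?_
    by_cases h1 : (a : ℕ) = (j : ℕ) ∧ P (a : ℕ)
    · rw [if_neg (fun hc => hab (Fin.ext (h1.1.trans hc.1.symm)) :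
        ¬((b : ℕ) = (j : ℕ) ∧ P (b : ℕ))), mul_zero]
    · rw [if_neg h1, zero_mul]

lemma frob_orth {N M : ℕ} (U : Matrix (Fin N) (Fin N) ℝ) (V : Matrix (Fin M) (Fin M) ℝ)
    (hU : Uᵀ * U = 1) (hV : Vᵀ * V = 1) (A : Matrix (Fin N) (Fin M) ℝ) :
    Matrix.trace ((U * A * Vᵀ) * (U * A * Vᵀ)ᵀ) = Matrix.trace (A * Aᵀ) := by
  rw [show (U * A * Vᵀ)ᵀ = V * (Aᵀ * Uᵀ) by
    simp [Matrix.transpose_mul, Matrix.mul_assoc]]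
  simp only [Matrix.mul_assoc]
  rw [← Matrix.mul_assoc Vᵀ V, hV, Matrix.one_mul]
  rw [Matrix.trace_mul_comm U]
  simp only [Matrix.mul_assoc]
  rw [hU, Matrix.mul_one]

lemma key_ineq {N : ℕ} (k : ℕ) (s c : Fin N → ℝ)
    (hs0 : ∀ i, 0 ≤ s i) (hsdec : ∀ i j : Fin N, (i : ℕ) ≤ (j : ℕ) → s j ≤ s i)
    (hc0 : ∀ i, 0 ≤ c i) (hc1 : ∀ i, c i ≤ 1) (hsum : ∑ i, c i ≤ (k : ℝ)) :
    ∑ i, c i * s i ≤ ∑ i : Fin N, (if (i : ℕ) < k then s i else 0) := by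
  by_cases hkN : k < N
  case neg =>
    have hall : ∀ i : Fin N, (i : ℕ) < k := fun i => lt_of_lt_of_le i.isLt (le_of_not_gt hkN)
    calc ∑ i, c i * s i ≤ ∑ i, s i :=
          Finset.sum_le_sum fun i _ => mul_le_of_le_one_left (hs0 i) (hc1 i)
      _ = _ := Finset.sum_congr rfl fun i _ => (if_pos (hall i)).symm
  case pos =>
    set κ : Fin N := ⟨k, hkN⟩ with hκ
    have hsplit : ∀ g : Fin N → ℝ, ∑ i : Fin N, g i =
        ∑ i : Fin N, (if (i : ℕ) < k then g i else 0) + ∑ i : Fin N, (if (i : ℕ) < k then 0 else g i) := by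
      intro g
      rw [← Finset.sum_add_distrib]
      exact Finset.sum_congr rfl fun i _ => by split <;> ring
    have hcard : ∑ i : Fin N, (if (i : ℕ) < k then (1 : ℝ) else 0) = (k : ℝ) := by
      rw [aux_sum_fin k (le_of_lt hkN) (fun _ => (1 : ℝ))]
      simp
    have h1 : ∑ i : Fin N, (if (i : ℕ) < k then 0 else c i * s i)
        ≤ ∑ i : Fin N, (if (i : ℕ) < k then 0 else c i * s κ) := by
      refine Finset.sum_le_sum fun i _ => ?_
      split
      · exact le_rfl
      · exact mul_le_mul_of_nonneg_left (hsdec κ i (le_of_not_gt ‹_›)) (hc0 i)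
    have h2 : ∑ i : Fin N, (if (i : ℕ) < k then 0 else c i * s κ)
        = s κ * ∑ i : Fin N, (if (i : ℕ) < k then 0 else c i) := by
      rw [Finset.mul_sum]; exact Finset.sum_congr rfl fun i _ => by split <;> ring
    have h4 : ∑ i : Fin N, (if (i : ℕ) < k then (1 : ℝ) else 0)
        - ∑ i : Fin N, (if (i : ℕ) < k then c i else 0)
        = ∑ i : Fin N, (if (i : ℕ) < k then (1 - c i) else 0) := by
      rw [← Finset.sum_sub_distrib]; exact Finset.sum_congr rfl fun i _ => by split <;> ring
    have h3 : ∑ i : Fin N, (if (i : ℕ) < k then 0 else c i)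
        ≤ ∑ i : Fin N, (if (i : ℕ) < k then (1 - c i) else 0) := by
      linarith [hsplit c]
    have h5 : s κ * ∑ i : Fin N, (if (i : ℕ) < k then (1 - c i) else 0)
        ≤ ∑ i : Fin N, (if (i : ℕ) < k then s i * (1 - c i) else 0) := by
      rw [Finset.mul_sum]
      refine Finset.sum_le_sum fun i _ => ?_
      split
      · exact mul_le_mul_of_nonneg_right (hsdec i κ (le_of_lt ‹_›)) (by linarith [hc1 i])
      · simp
    have h6 : ∑ i : Fin N, (if (i : ℕ) < k then c i * s i else 0)
        + ∑ i : Fin N, (if (i : ℕ) < k then s i * (1 - c i) else 0)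
        = ∑ i : Fin N, (if (i : ℕ) < k then s i else 0) := by
      rw [← Finset.sum_add_distrib]; exact Finset.sum_congr rfl fun i _ => by split <;> ring
    have h0 : (0 : ℝ) ≤ s κ := hs0 κ
    have h7 := mul_le_mul_of_nonneg_left h3 h0
    linarith [hsplit (fun i => c i * s i), h1, h2, h5, h6, h7]

/-- Eckart–Young for projections: any rank-k orthogonal projection Pr satisfies
‖X − PrX‖_F² ≥ Σ_{i>k} σ_i(X)², with equality for the projection onto the
top-k left singular subspace. -/
theorem eckart_young_projection
    (N M k : ℕ) (hk : k ≤ min N M)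
    (X : Matrix (Fin N) (Fin M) ℝ)
    (U : Matrix (Fin N) (Fin N) ℝ) (V : Matrix (Fin M) (Fin M) ℝ)
    (σ : ℕ → ℝ)
    (hU : Uᵀ * U = 1) (hV : Vᵀ * V = 1)
    (hσnonneg : ∀ i, 0 ≤ σ i)
    (hσdec : ∀ i j, i ≤ j → σ j ≤ σ i)
    (hSVD : X = U * (Matrix.of fun (i : Fin N) (j : Fin M) =>
        if (i : ℕ) = (j : ℕ) then σ (i : ℕ) else 0) * Vᵀ) :
    (∀ Pr : Matrix (Fin N) (Fin N) ℝ, Prᵀ = Pr → Pr * Pr = Pr → Pr.rank = k →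
      ∑ i ∈ Finset.Ico k (min N M), σ i ^ 2 ≤
        ∑ i : Fin N, ∑ j : Fin M, (X i j - (Pr * X) i j) ^ 2) ∧
    (∀ Pr0 : Matrix (Fin N) (Fin N) ℝ,
      (Pr0 = Matrix.of fun a b => ∑ i : Fin N,
        if (i : ℕ) < k then U a i * U b i else 0) →
      ∑ i : Fin N, ∑ j : Fin M, (X i j - (Pr0 * X) i j) ^ 2 =
        ∑ i ∈ Finset.Ico k (min N M), σ i ^ 2) := by
  have hUU : U * Uᵀ = 1 := mul_eq_one_comm.mp hU
  have hVV : V * Vᵀ = 1 := mul_eq_one_comm.mp hV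
  set E : Matrix (Fin N) (Fin M) ℝ := Matrix.of fun (i : Fin N) (j : Fin M) =>
      if (i : ℕ) = (j : ℕ) then σ (i : ℕ) else 0 with hE
  set s : Fin N → ℝ := fun a => if (a : ℕ) < M then σ (a : ℕ) ^ 2 else 0 with hs
  have hEform : E = Matrix.of fun (i : Fin N) (j : Fin M) =>
      if (i : ℕ) = (j : ℕ) ∧ (fun _ : ℕ => True) (i : ℕ) then σ (i : ℕ) else 0 := by
    ext i j; simp [hE]
  have hEE : E * Eᵀ = Matrix.diagonal s := by
    rw [hEform, pseudo_diag_mul σ (fun _ => True)]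
    funext a
    simp [hs]
  -- basic sum conversions
  have ha : ∑ a : Fin N, s a = ∑ i ∈ Finset.range (min N M), σ i ^ 2 := by
    rw [show ∑ a : Fin N, s a
        = ∑ a : Fin N, (if (a : ℕ) < min N M then σ (a : ℕ) ^ 2 else 0) from
      Finset.sum_congr rfl fun a _ => by
        by_cases h : (a : ℕ) < M
        · rw [hs]; simp only []
          rw [if_pos h, if_pos (lt_min a.isLt h)]
        · rw [hs]; simp only []
          rw [if_neg h, if_neg (fun hc => h (lt_of_lt_of_le hc (min_le_right N M)))]]
    exact aux_sum_fin (min N M) (min_le_left N M) (fun n => σ n ^ 2)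
  have hb : ∑ a : Fin N, (if (a : ℕ) < k then s a else 0)
      = ∑ i ∈ Finset.range k, σ i ^ 2 := by
    rw [show ∑ a : Fin N, (if (a : ℕ) < k then s a else 0)
        = ∑ a : Fin N, (if (a : ℕ) < k then σ (a : ℕ) ^ 2 else 0) from
      Finset.sum_congr rfl fun a _ => by
        by_cases h : (a : ℕ) < k
        · rw [if_pos h, if_pos h, hs]; simp only []
          rw [if_pos (lt_of_lt_of_le h (hk.trans (min_le_right N M)))]
        · rw [if_neg h, if_neg h]]
    exact aux_sum_fin k (hk.trans (min_le_left N M)) (fun n => σ n ^ 2)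
  have he : ∑ i ∈ Finset.Ico k (min N M), σ i ^ 2
      = ∑ i ∈ Finset.range (min N M), σ i ^ 2 - ∑ i ∈ Finset.range k, σ i ^ 2 :=
    Finset.sum_Ico_eq_sub _ hk
  have hXXT : X * Xᵀ = U * Matrix.diagonal s * Uᵀ := by
    rw [hSVD]
    rw [show (U * E * Vᵀ)ᵀ = V * (Eᵀ * Uᵀ) by
      simp [Matrix.transpose_mul, Matrix.mul_assoc]]
    simp only [Matrix.mul_assoc]
    rw [← Matrix.mul_assoc Vᵀ V, hV, Matrix.one_mul, ← Matrix.mul_assoc E Eᵀ, hEE]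
  constructor
  · -- inequality part
    intro Pr hPrT hPrP hPrRank
    set B : Matrix (Fin N) (Fin N) ℝ := Uᵀ * Pr * U with hB
    have hBsym : Bᵀ = B := by
      rw [hB]
      simp [Matrix.transpose_mul, Matrix.transpose_transpose, hPrT, Matrix.mul_assoc]
    have hsym' : ∀ a b, B b a = B a b := fun a b => congrFun (congrFun hBsym a) b
    have hBB : B * B = B := by
      rw [hB]
      simp only [Matrix.mul_assoc]
      rw [← Matrix.mul_assoc U Uᵀ, hUU, Matrix.one_mul,
          ← Matrix.mul_assoc Pr Pr, hPrP]
    have hBdiag_eq : ∀ a, B a a = ∑ b, (B a b) ^ 2 := by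
      intro a
      conv_lhs => rw [← hBB]
      rw [Matrix.mul_apply]
      exact Finset.sum_congr rfl fun b _ => by rw [hsym' a b, sq]
    have hc0 : ∀ a, 0 ≤ B a a := fun a =>
      (hBdiag_eq a) ▸ Finset.sum_nonneg fun b _ => sq_nonneg _
    have hc1 : ∀ a, B a a ≤ 1 := by
      intro a
      have h2 : (B a a) ^ 2 ≤ ∑ b, (B a b) ^ 2 :=
        Finset.single_le_sum (f := fun b => (B a b) ^ 2) (fun b _ => sq_nonneg _)
          (Finset.mem_univ a)
      rw [← hBdiag_eq a] at h2
      nlinarith [sq_nonneg (B a a - 1)]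
    have htrB : Matrix.trace B = (k : ℝ) := by
      have h1 : Matrix.trace B = Matrix.trace Pr := by
        rw [hB, Matrix.trace_mul_comm (Uᵀ * Pr) U, ← Matrix.mul_assoc, hUU, Matrix.one_mul]
      rw [h1, trace_idem Pr hPrP, hPrRank]
    have hsum : ∑ a : Fin N, B a a = (k : ℝ) := by
      simpa [Matrix.trace, Matrix.diag] using htrB
    have htr1 : Matrix.trace (X * Xᵀ) = ∑ a : Fin N, s a := by
      rw [hXXT, Matrix.trace_mul_comm (U * Matrix.diagonal s) Uᵀ, ← Matrix.mul_assoc, hU,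
        Matrix.one_mul, Matrix.trace_diagonal]
    have htr2 : Matrix.trace (Pr * (X * Xᵀ)) = ∑ a : Fin N, B a a * s a := by
      rw [hXXT]
      rw [show Pr * (U * Matrix.diagonal s * Uᵀ) = (Pr * (U * Matrix.diagonal s)) * Uᵀ by
        simp [Matrix.mul_assoc]]
      rw [Matrix.trace_mul_comm, ← Matrix.mul_assoc, ← Matrix.mul_assoc]
      simp [Matrix.trace, Matrix.diag, Matrix.mul_diagonal, hB]
    -- the quantity equals trace (X Xᵀ) - trace (Pr X Xᵀ)
    set Q : Matrix (Fin N) (Fin N) ℝ := 1 - Pr with hQdef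
    have hQT : Qᵀ = Q := by
      rw [hQdef, Matrix.transpose_sub, Matrix.transpose_one, hPrT]
    have hQQ : Q * Q = Q := by
      rw [hQdef, Matrix.sub_mul, Matrix.one_mul, Matrix.mul_sub, Matrix.mul_one, hPrP,
        sub_self, sub_zero]
    have hQentry : ∀ i j, X i j - (Pr * X) i j = (Q * X) i j := by
      intro i j
      rw [hQdef, Matrix.sub_mul, Matrix.one_mul, Matrix.sub_apply]
    have hval : ∑ i : Fin N, ∑ j : Fin M, (X i j - (Pr * X) i j) ^ 2
        = Matrix.trace (X * Xᵀ) - Matrix.trace (Pr * (X * Xᵀ)) := by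
      calc ∑ i : Fin N, ∑ j : Fin M, (X i j - (Pr * X) i j) ^ 2
          = ∑ i : Fin N, ∑ j : Fin M, ((Q * X) i j) ^ 2 := by
            exact Finset.sum_congr rfl fun i _ => Finset.sum_congr rfl fun j _ => by
              rw [hQentry i j]
        _ = Matrix.trace ((Q * X) * (Q * X)ᵀ) := frob _
        _ = Matrix.trace (Q * (X * Xᵀ)) := by
            rw [Matrix.transpose_mul, hQT]
            rw [show Q * X * (Xᵀ * Q) = (Q * (X * Xᵀ)) * Q by simp [Matrix.mul_assoc]]
            rw [Matrix.trace_mul_comm, ← Matrix.mul_assoc, hQQ]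
        _ = Matrix.trace (X * Xᵀ) - Matrix.trace (Pr * (X * Xᵀ)) := by
            rw [hQdef, Matrix.sub_mul, Matrix.one_mul, Matrix.trace_sub]
    have hs0 : ∀ i, 0 ≤ s i := by
      intro i; rw [hs]; dsimp only
      split
      · exact sq_nonneg _
      · exact le_rfl
    have hsdec : ∀ i j : Fin N, (i : ℕ) ≤ (j : ℕ) → s j ≤ s i := by
      intro i j hij
      rw [hs]; dsimp only
      by_cases hj : (j : ℕ) < M
      · rw [if_pos hj, if_pos (lt_of_le_of_lt hij hj)]
        exact pow_le_pow_left₀ (hσnonneg _) (hσdec _ _ hij) 2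
      · rw [if_neg hj]
        split
        · exact sq_nonneg _
        · exact le_rfl
    have hkey := key_ineq k s (fun a => B a a) hs0 hsdec hc0 hc1 (le_of_eq hsum)
    rw [hval, htr1, htr2, he]
    linarith [hkey, ha, hb]
  · -- equality part
    intro Pr0 hPr0
    set D : Matrix (Fin N) (Fin N) ℝ :=
      Matrix.diagonal (fun i : Fin N => if (i : ℕ) < k then (1 : ℝ) else 0) with hD
    have hPr0D : Pr0 = U * D * Uᵀ := by
      rw [hPr0]
      ext a b
      rw [Matrix.of_apply, Matrix.mul_apply]
      refine Finset.sum_congr rfl fun i _ => ?_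
      rw [hD, Matrix.mul_diagonal, Matrix.transpose_apply]
      split <;> ring
    have hPr0X : X - Pr0 * X = U * (E - D * E) * Vᵀ := by
      rw [hPr0D, hSVD]
      rw [show (U * D * Uᵀ) * (U * E * Vᵀ) = U * (D * E) * Vᵀ by
        simp only [Matrix.mul_assoc]
        rw [← Matrix.mul_assoc Uᵀ U, hU, Matrix.one_mul]]
      rw [← Matrix.sub_mul, ← Matrix.mul_sub]
    have hF : E - D * E = Matrix.of fun (i : Fin N) (j : Fin M) =>
        if (i : ℕ) = (j : ℕ) ∧ k ≤ (i : ℕ) then σ (i : ℕ) else 0 := by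
      ext i j
      rw [Matrix.sub_apply, hD, Matrix.diagonal_mul, Matrix.of_apply]
      rcases lt_or_ge (i : ℕ) k with h | h
      · rw [if_pos h, if_neg (fun hc => absurd hc.2 (Nat.not_le.mpr h)), one_mul, sub_self]
      · rw [if_neg (Nat.not_lt.mpr h), zero_mul, sub_zero, hE]
        simp only [Matrix.of_apply]
        by_cases hij : (i : ℕ) = (j : ℕ)
        · rw [if_pos hij, if_pos ⟨hij, h⟩]
        · rw [if_neg hij, if_neg (fun hc => hij hc.1)]
    have hFF : (E - D * E) * (E - D * E)ᵀ = Matrix.diagonal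
        (fun a : Fin N => if (a : ℕ) < M ∧ k ≤ (a : ℕ) then σ (a : ℕ) ^ 2 else 0) := by
      rw [hF]
      exact pseudo_diag_mul σ (fun n => k ≤ n)
    have hd : ∑ a : Fin N, (if (a : ℕ) < M ∧ k ≤ (a : ℕ) then σ (a : ℕ) ^ 2 else 0)
        = ∑ i ∈ Finset.Ico k (min N M), σ i ^ 2 := by
      rw [Fin.sum_univ_eq_sum_range (fun n => if n < M ∧ k ≤ n then σ n ^ 2 else 0) N]
      have hsub : Finset.Ico k (min N M) ⊆ Finset.range N := by
        intro x hx
        rw [Finset.mem_range]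
        rw [Finset.mem_Ico] at hx
        omega
      rw [← Finset.sum_subset hsub (fun x hx hnx => by
        rw [Finset.mem_range] at hx
        rw [Finset.mem_Ico] at hnx
        rw [if_neg]
        omega)]
      refine Finset.sum_congr rfl fun x hx => ?_
      rw [Finset.mem_Ico] at hx
      rw [if_pos ⟨by omega, hx.1⟩]
    calc ∑ i : Fin N, ∑ j : Fin M, (X i j - (Pr0 * X) i j) ^ 2
        = ∑ i : Fin N, ∑ j : Fin M, ((X - Pr0 * X) i j) ^ 2 := by
          exact Finset.sum_congr rfl fun i _ => Finset.sum_congr rfl fun j _ => by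
            rw [Matrix.sub_apply]
      _ = Matrix.trace ((X - Pr0 * X) * (X - Pr0 * X)ᵀ) := frob _
      _ = Matrix.trace ((E - D * E) * (E - D * E)ᵀ) := by
          rw [hPr0X]
          exact frob_orth U V hU hV _
      _ = ∑ i ∈ Finset.Ico k (min N M), σ i ^ 2 := by
          rw [hFF, Matrix.trace_diagonal]
          exact hd
end
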